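/- arXiv:1710.08025 — 3 statements merged into one kernel-verified Lean document; each statement's English description precedes it below -/
import Mathlib

section
/- For positive integers s and u with s ≥ 2u - 1, we have C(s-u, u) / C(s, u) ≥ 1 - u²/(s - u + 1). -/
theorem stmt_0 (s u : ℕ) (hs : 0 < s) (hu : 0 < u) (h : 2 * u - 1 ≤ s) :
    (1 : ℝ) - (u : ℝ) ^ 2 / ((s : ℝ) - u + 1) ≤ ((s - u).choose u : ℝ) / (s.choose u : ℝ) := by
  have hus : u ≤ s := by omega
  have h2u : 2 * u ≤ s + 1 := by omega
  have hd : (u : ℝ) ≤ (s : ℝ) - u + 1 := by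
    have := (Nat.cast_le (α := ℝ)).2 h2u
    push_cast at this; linarith
  have hupos : (0 : ℝ) < u := by exact_mod_cast hu
  have hdpos : (0 : ℝ) < (s : ℝ) - u + 1 := lt_of_lt_of_le hupos hd
  -- numerator product
  have h1 : ((s - u).descFactorial u : ℝ) = ∏ i ∈ Finset.range u, ((s : ℝ) - u - i) := by
    rw [Nat.descFactorial_eq_prod_range]
    push_cast
    refine Finset.prod_congr rfl fun i hi => ?_
    have hi' : i < u := Finset.mem_range.1 hi
    rw [Nat.cast_sub (by omega : i ≤ s - u), Nat.cast_sub hus]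
  have h2 : (s.descFactorial u : ℝ) = ∏ i ∈ Finset.range u, ((s : ℝ) - i) := by
    rw [Nat.descFactorial_eq_prod_range]
    push_cast
    refine Finset.prod_congr rfl fun i hi => ?_
    have hi' : i < u := Finset.mem_range.1 hi
    rw [Nat.cast_sub (by omega)]
  have hfacpos : (0 : ℝ) < ((Nat.factorial u : ℕ) : ℝ) := by exact_mod_cast Nat.factorial_pos u
  have hratio : ((s - u).choose u : ℝ) / (s.choose u : ℝ)
      = ∏ i ∈ Finset.range u, (((s : ℝ) - u - i) / ((s : ℝ) - i)) := by
    rw [Finset.prod_div_distrib, ← h1, ← h2,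
      Nat.descFactorial_eq_factorial_mul_choose, Nat.descFactorial_eq_factorial_mul_choose]
    push_cast
    rw [mul_div_mul_left _ _ (ne_of_gt hfacpos)]
  rw [hratio]
  have hnonneg : (0 : ℝ) ≤ 1 - (u : ℝ) / ((s : ℝ) - u + 1) := by
    rw [sub_nonneg, div_le_one hdpos]; exact hd
  have key : ∀ i ∈ Finset.range u,
      (1 : ℝ) - (u : ℝ) / ((s : ℝ) - u + 1) ≤ ((s : ℝ) - u - i) / ((s : ℝ) - i) := by
    intro i hi
    have hi' : i < u := Finset.mem_range.1 hi
    have hiR : (i : ℝ) ≤ (u : ℝ) - 1 := by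
      have : (i : ℝ) + 1 ≤ u := by exact_mod_cast hi'
      linarith
    have hden : (s : ℝ) - u + 1 ≤ (s : ℝ) - i := by linarith
    have hdenpos : (0 : ℝ) < (s : ℝ) - i := lt_of_lt_of_le hdpos hden
    have e : ((s : ℝ) - u - i) / ((s : ℝ) - i) = 1 - (u : ℝ) / ((s : ℝ) - i) := by
      field_simp
      ring
    have hmono : (u : ℝ) / ((s : ℝ) - i) ≤ (u : ℝ) / ((s : ℝ) - u + 1) :=
      div_le_div_of_nonneg_left (le_of_lt hupos) hdpos hden
    rw [e]
    linarith [hmono]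
  calc (1 : ℝ) - (u : ℝ) ^ 2 / ((s : ℝ) - u + 1)
      ≤ (1 - (u : ℝ) / ((s : ℝ) - u + 1)) ^ u := by
        have hb : (-2 : ℝ) ≤ -((u : ℝ) / ((s : ℝ) - u + 1)) := by
          have : (u : ℝ) / ((s : ℝ) - u + 1) ≤ 1 := (div_le_one hdpos).2 hd
          linarith
        have := one_add_mul_le_pow hb u
        have heq : 1 + (u : ℝ) * -((u : ℝ) / ((s : ℝ) - u + 1))
            = 1 - (u : ℝ) ^ 2 / ((s : ℝ) - u + 1) := by ring
        rw [heq] at this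
        simpa [sub_eq_add_neg] using this
    _ = ∏ _i ∈ Finset.range u, (1 - (u : ℝ) / ((s : ℝ) - u + 1)) := by
        rw [Finset.prod_const, Finset.card_range]
    _ ≤ ∏ i ∈ Finset.range u, (((s : ℝ) - u - i) / ((s : ℝ) - i)) :=
        Finset.prod_le_prod (fun i _ => hnonneg) key
end

section
/- If H is a graph in which every edge lies in a triangle and t ≥ e(H), then sat_t(n, R(H)) ≥ (1/(4t) + o(1)) · n log n. -/
open SimpleGraph

/-- `(G, c)` contains a rainbow copy of `H`: there is a graph embedding of `H` into `G`
whose edges receive pairwise distinct colours. -/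
def HasRainbowCopy {W V : Type*} (H : SimpleGraph W) (G : SimpleGraph V)
    (c : Sym2 V → ℕ) : Prop :=
  ∃ f : H ↪g G, ∀ e₁ ∈ H.edgeSet, ∀ e₂ ∈ H.edgeSet,
    c (Sym2.map f e₁) = c (Sym2.map f e₂) → e₁ = e₂

/-- `(G, c)` is `R(H)`-saturated with palette `{1, …, t}`: colours of edges lie in
`{1, …, t}`, there is no rainbow copy of `H`, and adding any non-edge in any colour
from `{1, …, t}` creates a rainbow copy of `H`. -/
def IsRainbowSat {W V : Type*} [DecidableEq V] (H : SimpleGraph W) (t : ℕ) (G : SimpleGraph V)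
    (c : Sym2 V → ℕ) : Prop :=
  (∀ e ∈ G.edgeSet, c e ∈ Finset.Icc 1 t) ∧
  ¬ HasRainbowCopy H G c ∧
  ∀ x y : V, x ≠ y → ¬ G.Adj x y → ∀ i ∈ Finset.Icc 1 t,
    HasRainbowCopy H (G ⊔ SimpleGraph.fromEdgeSet {s(x, y)})
      (fun e => if e = s(x, y) then i else c e)

/-- `sat_t(n, R(H))`: the minimum number of edges in an `R(H)`-saturated
`t`-edge-coloured graph on `n` vertices. -/
noncomputable def rainbowSatNum {W : Type*} (H : SimpleGraph W) (t n : ℕ) : ℕ :=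
  sInf { m | ∃ (G : SimpleGraph (Fin n)) (c : Sym2 (Fin n) → ℕ),
    IsRainbowSat H t G c ∧ Nat.card G.edgeSet = m }

/-- `(G, c)` is `R(H)`-saturated with an unbounded palette `ℕ`. -/
def IsRainbowSatInf {W V : Type*} [DecidableEq V] (H : SimpleGraph W) (G : SimpleGraph V)
    (c : Sym2 V → ℕ) : Prop :=
  ¬ HasRainbowCopy H G c ∧
  ∀ x y : V, x ≠ y → ¬ G.Adj x y → ∀ i : ℕ,
    HasRainbowCopy H (G ⊔ SimpleGraph.fromEdgeSet {s(x, y)})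
      (fun e => if e = s(x, y) then i else c e)

/-- `sat(n, R(H))`: the rainbow saturation number with an unbounded palette. -/
noncomputable def rainbowSatNumInf {W : Type*} (H : SimpleGraph W) (n : ℕ) : ℕ :=
  sInf { m | ∃ (G : SimpleGraph (Fin n)) (c : Sym2 (Fin n) → ℕ),
    IsRainbowSatInf H G c ∧ Nat.card G.edgeSet = m }


section AuxRainbow
open Filter

lemma conflict {W V : Type*} [DecidableEq V] {H : SimpleGraph W} {t : ℕ}
    {G : SimpleGraph V} {c : Sym2 V → ℕ}
    (hsat : IsRainbowSat H t G c) (ht1 : 1 ≤ t)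
    (htri : ∀ x y : W, H.Adj x y → ∃ z, H.Adj x z ∧ H.Adj y z)
    {u v : V} (huv : u ≠ v) (hna : ¬ G.Adj u v) :
    ∃ w, G.Adj u w ∧ G.Adj v w ∧ c s(u, w) ≠ c s(v, w) := by
  classical
  obtain ⟨f, hf⟩ := hsat.2.2 u v huv hna 1 (Finset.mem_Icc.2 ⟨le_refl 1, ht1⟩)
  by_cases hcase : ∃ e ∈ H.edgeSet, Sym2.map (f : W → V) e = s(u, v)
  · -- the copy uses the new edge
    obtain ⟨e, he, hmape⟩ := hcase
    obtain ⟨a, b, hab, hmap⟩ : ∃ a b, H.Adj a b ∧ s((f : W → V) a, (f : W → V) b) = s(u, v) := by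
      induction e using Sym2.ind with
      | _ a b => exact ⟨a, b, he, by rwa [Sym2.map_pair_eq] at hmape⟩
    obtain ⟨z, haz, hbz⟩ := htri a b hab
    have habz : s((f : W → V) a, (f : W → V) z) ≠ s(u, v) := by
      intro h
      have h' := h.trans hmap.symm
      rw [Sym2.eq_iff] at h'
      rcases h' with ⟨h1, h2⟩ | ⟨h1, h2⟩
      · exact hbz.ne' (f.injective h2)
      · exact hab.ne (f.injective h1)
    have hbbz : s((f : W → V) b, (f : W → V) z) ≠ s(u, v) := by
      intro h
      have h' := h.trans hmap.symm
      rw [Sym2.eq_iff] at h'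
      rcases h' with ⟨h1, h2⟩ | ⟨h1, h2⟩
      · exact hab.ne (f.injective h1).symm
      · exact haz.ne (f.injective h2.symm)
    have key : ∃ w, G.Adj ((f : W → V) a) w ∧ G.Adj ((f : W → V) b) w ∧
        c s((f : W → V) a, w) ≠ c s((f : W → V) b, w) := by
      refine ⟨(f : W → V) z, ?_, ?_, ?_⟩
      · have h1 : (G ⊔ SimpleGraph.fromEdgeSet {s(u, v)}).Adj ((f : W → V) a) ((f : W → V) z) :=
          f.map_adj_iff.2 haz
        rcases (SimpleGraph.sup_adj _ _ _ _).1 h1 with h | h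
        · exact h
        · exact absurd (by simpa [SimpleGraph.fromEdgeSet_adj] using h.1) habz
      · have h1 : (G ⊔ SimpleGraph.fromEdgeSet {s(u, v)}).Adj ((f : W → V) b) ((f : W → V) z) :=
          f.map_adj_iff.2 hbz
        rcases (SimpleGraph.sup_adj _ _ _ _).1 h1 with h | h
        · exact h
        · exact absurd (by simpa [SimpleGraph.fromEdgeSet_adj] using h.1) hbbz
      · intro hcc
        have heq : (fun e => if e = s(u, v) then (1:ℕ) else c e) (Sym2.map (f : W → V) s(a, z)) =
            (fun e => if e = s(u, v) then (1:ℕ) else c e) (Sym2.map (f : W → V) s(b, z)) := by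
          simp only [Sym2.map_pair_eq]
          rw [if_neg habz, if_neg hbbz]
          exact hcc
        have h2 := hf s(a, z) (H.mem_edgeSet.2 haz) s(b, z) (H.mem_edgeSet.2 hbz) heq
        rw [Sym2.eq_iff] at h2
        rcases h2 with ⟨h3, h4⟩ | ⟨h3, h4⟩
        · exact hab.ne h3
        · exact haz.ne h3
    rw [Sym2.eq_iff] at hmap
    obtain ⟨w, hw1, hw2, hw3⟩ := key
    rcases hmap with ⟨h1, h2⟩ | ⟨h1, h2⟩
    · simp only [h1, h2] at hw1 hw2 hw3
      exact ⟨w, hw1, hw2, hw3⟩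
    · simp only [h1, h2] at hw1 hw2 hw3
      exact ⟨w, hw2, hw1, hw3.symm⟩
  · -- the copy avoids the new edge: contradiction with no rainbow copy in G
    exfalso
    push_neg at hcase
    apply hsat.2.1
    refine ⟨⟨f.toEmbedding, ?_⟩, ?_⟩
    · intro a b
      constructor
      · intro h
        exact f.map_adj_iff.1 (SimpleGraph.sup_adj _ _ _ _ |>.2 (Or.inl h))
      · intro h
        have h1 : (G ⊔ SimpleGraph.fromEdgeSet {s(u, v)}).Adj ((f : W → V) a) ((f : W → V) b) :=
          f.map_adj_iff.2 h
        rcases (SimpleGraph.sup_adj _ _ _ _).1 h1 with h2 | h2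
        · exact h2
        · exfalso
          have h3 : s((f : W → V) a, (f : W → V) b) = s(u, v) := by
            simpa [SimpleGraph.fromEdgeSet_adj] using h2.1
          exact hcase s(a, b) (H.mem_edgeSet.2 h) (by rwa [Sym2.map_pair_eq])
    · intro e₁ he₁ e₂ he₂ hcc
      apply hf e₁ he₁ e₂ he₂
      have k1 : Sym2.map (f : W → V) e₁ ≠ s(u, v) := hcase e₁ he₁
      have k2 : Sym2.map (f : W → V) e₂ ≠ s(u, v) := hcase e₂ he₂
      simp only [if_neg k1, if_neg k2]
      exact hcc
lemma indep_aux {V : Type*} [Fintype V] [DecidableEq V] (G : SimpleGraph V)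
    [DecidableRel G.Adj] (D : ℕ) :
    ∀ (k : ℕ) (A : Finset V), A.card ≤ k → (∀ v ∈ A, G.degree v ≤ D) →
    ∃ I : Finset V, I ⊆ A ∧ (∀ u ∈ I, ∀ v ∈ I, u ≠ v → ¬ G.Adj u v) ∧
      A.card ≤ (D + 1) * I.card := by
  intro k
  induction k with
  | zero =>
    intro A hA _
    exact ⟨∅, Finset.empty_subset _, by simp, by simpa using hA⟩
  | succ k ih =>
    intro A hA hdeg
    rcases A.eq_empty_or_nonempty with rfl | ⟨v, hv⟩
    · exact ⟨∅, Finset.empty_subset _, by simp, by simp⟩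
    set S : Finset V := insert v (G.neighborFinset v) with hS
    set A' : Finset V := A \ S with hA'
    have hvS : v ∈ S := Finset.mem_insert_self _ _
    have hsub : A' ⊆ A := Finset.sdiff_subset
    have hcard' : A'.card ≤ k := by
      have : A'.card < A.card := Finset.card_lt_card ⟨hsub, fun hAs => by
        have := hAs hv
        simp [hA'] at this
        exact this.2 hvS⟩
      omega
    obtain ⟨I', hI'sub, hI'ind, hI'card⟩ := ih A' hcard' (fun w hw => hdeg w (hsub hw))
    have hvI' : v ∉ I' := fun h => by simp [hA'] at hI'sub; exact ((Finset.mem_sdiff.1 (hI'sub h)).2) hvS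
    refine ⟨insert v I', ?_, ?_, ?_⟩
    · intro x hx
      rcases Finset.mem_insert.1 hx with rfl | hx
      · exact hv
      · exact hsub (hI'sub hx)
    · intro x hx y hy hxy
      rcases Finset.mem_insert.1 hx with hx' | hx'
      · rcases Finset.mem_insert.1 hy with hy' | hy'
        · exact absurd (hx'.trans hy'.symm) hxy
        · intro hadj
          rw [hx'] at hadj
          have hyS : y ∈ S := by simp [hS, SimpleGraph.mem_neighborFinset, hadj]
          exact (Finset.mem_sdiff.1 (hI'sub hy')).2 hyS
      · rcases Finset.mem_insert.1 hy with hy' | hy'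
        · intro hadj
          rw [hy'] at hadj
          have hxS : x ∈ S := by simp [hS, SimpleGraph.mem_neighborFinset, hadj.symm]
          exact (Finset.mem_sdiff.1 (hI'sub hx')).2 hxS
        · exact hI'ind x hx' y hy' hxy
    · have hAsub : A ⊆ A' ∪ S := by
        intro x hx
        by_cases hxS : x ∈ S
        · exact Finset.mem_union_right _ hxS
        · exact Finset.mem_union_left _ (Finset.mem_sdiff.2 ⟨hx, hxS⟩)
      have hScard : S.card ≤ D + 1 := by
        rw [hS]
        have := Finset.card_insert_le v (G.neighborFinset v)
        have h2 : (G.neighborFinset v).card = G.degree v := G.card_neighborFinset_eq_degree v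
        have := hdeg v hv
        omega
      calc A.card ≤ (A' ∪ S).card := Finset.card_le_card hAsub
        _ ≤ A'.card + S.card := Finset.card_union_le _ _
        _ ≤ (D + 1) * I'.card + (D + 1) := by omega
        _ = (D + 1) * (insert v I').card := by
            rw [Finset.card_insert_of_notMem hvI']; ring
lemma count_lemma {V : Type*} [Fintype V] [DecidableEq V] {G : SimpleGraph V}
    [DecidableRel G.Adj] {c : Sym2 V → ℕ} {t : ℕ} (ht1 : 1 ≤ t)
    (hc : ∀ e ∈ G.edgeSet, c e ∈ Finset.Icc 1 t)
    (I : Finset V) (d' : ℕ) (hdeg : ∀ v ∈ I, G.degree v ≤ d')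
    (hconf : ∀ u ∈ I, ∀ v ∈ I, u ≠ v → ∃ w, G.Adj u w ∧ G.Adj v w ∧ c s(u, w) ≠ c s(v, w)) :
    I.card ≤ t ^ d' := by
  classical
  set n := Fintype.card V with hn
  set F : V → Finset (V → Fin t) :=
    fun v => Finset.univ.filter (fun σ => ∀ w ∈ G.neighborFinset v, (σ w : ℕ) + 1 = c s(v, w))
    with hF
  -- lower bound on each |F v|
  have hFcard : ∀ v, t ^ (n - G.degree v) ≤ (F v).card := by
    intro v
    have hcol : ∀ w ∈ G.neighborFinset v, c s(v, w) - 1 < t := by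
      intro w hw
      have hadj : G.Adj v w := (SimpleGraph.mem_neighborFinset _ _ _).1 hw
      have := hc s(v, w) (G.mem_edgeSet.2 hadj)
      rw [Finset.mem_Icc] at this
      omega
    set Φ : ({x // x ∈ (G.neighborFinset v)ᶜ} → Fin t) → (V → Fin t) :=
      fun τ w => if h : w ∈ G.neighborFinset v then ⟨c s(v, w) - 1, hcol w h⟩
                 else τ ⟨w, Finset.mem_compl.2 h⟩ with hΦ
    have hmem : ∀ τ, Φ τ ∈ F v := by
      intro τ
      rw [hF]
      simp only [Finset.mem_filter, Finset.mem_univ, true_and]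
      intro w hw
      have hadj : G.Adj v w := (SimpleGraph.mem_neighborFinset _ _ _).1 hw
      have h1 : 1 ≤ c s(v, w) := by
        have := hc s(v, w) (G.mem_edgeSet.2 hadj)
        rw [Finset.mem_Icc] at this
        omega
      simp only [hΦ, dif_pos hw]
      omega
    have hinj : Function.Injective (fun τ => (⟨Φ τ, hmem τ⟩ : {σ // σ ∈ F v})) := by
      intro τ₁ τ₂ h
      funext ⟨w, hw⟩
      have hw' : w ∉ G.neighborFinset v := Finset.mem_compl.1 hw
      have h0 : Φ τ₁ w = Φ τ₂ w := congrArg (fun σ => σ.1 w) h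
      simp only [hΦ] at h0
      rw [dif_neg hw', dif_neg hw'] at h0
      exact h0
    have := Fintype.card_le_of_injective _ hinj
    rw [Fintype.card_fun, Fintype.card_coe, Fintype.card_coe, Fintype.card_fin,
      Finset.card_compl] at this
    rw [G.card_neighborFinset_eq_degree] at this
    exact this
  -- disjointness
  have hdisj : ∀ u ∈ I, ∀ v ∈ I, u ≠ v → Disjoint (F u) (F v) := by
    intro u hu v hv huv
    rw [Finset.disjoint_left]
    intro σ hσu hσv
    obtain ⟨w, hwu, hwv, hne⟩ := hconf u hu v hv huv
    rw [hF, Finset.mem_filter] at hσu hσv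
    have h1 := hσu.2 w ((SimpleGraph.mem_neighborFinset _ _ _).2 hwu)
    have h2 := hσv.2 w ((SimpleGraph.mem_neighborFinset _ _ _).2 hwv)
    omega
  -- combine
  have hsum : ∑ v ∈ I, (F v).card ≤ t ^ n := by
    rw [← Finset.card_biUnion (fun u hu v hv huv => hdisj u hu v hv huv)]
    calc (I.biUnion F).card ≤ Finset.univ.card := Finset.card_le_univ _
      _ = Fintype.card (V → Fin t) := Finset.card_univ
      _ = t ^ n := by rw [Fintype.card_fun, Fintype.card_fin]
  have hmain : I.card * t ^ n ≤ t ^ d' * t ^ n := by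
    calc I.card * t ^ n = ∑ _v ∈ I, t ^ n := by rw [Finset.sum_const, smul_eq_mul]
      _ ≤ ∑ v ∈ I, (F v).card * t ^ d' := by
          apply Finset.sum_le_sum
          intro v hv
          have hdv : G.degree v ≤ n := by
            rw [← G.card_neighborFinset_eq_degree, hn]
            exact Finset.card_le_univ _
          calc t ^ n = t ^ (n - G.degree v) * t ^ (G.degree v) := by
                rw [← pow_add, Nat.sub_add_cancel hdv]
            _ ≤ (F v).card * t ^ d' :=
                Nat.mul_le_mul (hFcard v) (Nat.pow_le_pow_right ht1 (hdeg v hv))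
      _ = (∑ v ∈ I, (F v).card) * t ^ d' := by rw [Finset.sum_mul]
      _ ≤ t ^ n * t ^ d' := Nat.mul_le_mul_right _ hsum
      _ = t ^ d' * t ^ n := Nat.mul_comm _ _
  exact Nat.le_of_mul_le_mul_right hmain (Nat.pow_pos (n := n) ht1)

lemma sat_count {W : Type*} {H : SimpleGraph W}
    (htri : ∀ x y : W, H.Adj x y → ∃ z, H.Adj x z ∧ H.Adj y z)
    {t : ℕ} (ht1 : 1 ≤ t) {n d : ℕ} (hd : 1 ≤ d) {G : SimpleGraph (Fin n)} {c : Sym2 (Fin n) → ℕ}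
    (hsat : IsRainbowSat H t G c) :
    d * n ≤ 2 * G.edgeSet.ncard + d * (d * t ^ (d - 1)) := by
  classical
  letI : DecidableRel G.Adj := Classical.decRel _
  set A : Finset (Fin n) := Finset.univ.filter (fun v => G.degree v < d) with hA
  obtain ⟨I, hIsub, hIind, hIcard⟩ := indep_aux G (d - 1) A.card A le_rfl (by
    intro v hv
    rw [hA, Finset.mem_filter] at hv
    omega)
  have hIdeg : ∀ v ∈ I, G.degree v ≤ d - 1 := by
    intro v hv
    have := hIsub hv
    rw [hA, Finset.mem_filter] at this
    omega
  have hIconf : ∀ u ∈ I, ∀ v ∈ I, u ≠ v →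
      ∃ w, G.Adj u w ∧ G.Adj v w ∧ c s(u, w) ≠ c s(v, w) :=
    fun u hu v hv huv => conflict hsat ht1 htri huv (hIind u hu v hv huv)
  have hIt : I.card ≤ t ^ (d - 1) := count_lemma ht1 hsat.1 I (d - 1) hIdeg hIconf
  have hAcard : A.card ≤ d * t ^ (d - 1) := by
    calc A.card ≤ (d - 1 + 1) * I.card := hIcard
      _ = d * I.card := by rw [Nat.sub_add_cancel hd]
      _ ≤ d * t ^ (d - 1) := Nat.mul_le_mul_left _ hIt
  have hdegsum : d * (Finset.univ \ A).card ≤ ∑ v, G.degree v := by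
    calc d * (Finset.univ \ A).card = (Finset.univ \ A).card • d := (Nat.mul_comm _ _).trans rfl
      _ ≤ ∑ v ∈ Finset.univ \ A, G.degree v := Finset.card_nsmul_le_sum _ _ _ (by
          intro v hv
          rw [Finset.mem_sdiff, hA, Finset.mem_filter] at hv
          have := hv.2
          simp only [Finset.mem_univ, true_and] at this
          omega)
      _ ≤ ∑ v, G.degree v := Finset.sum_le_sum_of_subset (Finset.sdiff_subset)
  have hE : ∑ v, G.degree v = 2 * G.edgeSet.ncard := by
    rw [SimpleGraph.sum_degrees_eq_twice_card_edges]
    congr 1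
    rw [← SimpleGraph.coe_edgeFinset, Set.ncard_coe_finset]
  have hcardsdiff : (Finset.univ \ A).card = n - A.card := by
    rw [Finset.card_sdiff_of_subset (Finset.subset_univ _), Finset.card_univ, Fintype.card_fin]
  have hAn : A.card ≤ n := by
    calc A.card ≤ Finset.univ.card := Finset.card_le_univ _
      _ = n := by rw [Finset.card_univ, Fintype.card_fin]
  calc d * n ≤ d * ((n - A.card) + A.card) := by
        apply Nat.mul_le_mul_left
        omega
    _ = d * (n - A.card) + d * A.card := Nat.mul_add _ _ _
    _ ≤ 2 * G.edgeSet.ncard + d * (d * t ^ (d - 1)) := by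
        rw [← hcardsdiff]
        have h1 := hdegsum.trans_eq hE
        have h2 : d * A.card ≤ d * (d * t ^ (d - 1)) := Nat.mul_le_mul_left _ hAcard
        omega
lemma exists_sat {W V : Type*} [Fintype V] [DecidableEq V] (H : SimpleGraph W)
    (hne : H.edgeSet.Nonempty) (t : ℕ) :
    ∃ (G : SimpleGraph V) (c : Sym2 V → ℕ), IsRainbowSat H t G c := by
  classical
  suffices haux : ∀ (k : ℕ) (G : SimpleGraph V) (c : Sym2 V → ℕ),
      (∀ e ∈ G.edgeSet, c e ∈ Finset.Icc 1 t) → ¬ HasRainbowCopy H G c →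
      (⊤ : SimpleGraph V).edgeSet.ncard - G.edgeSet.ncard ≤ k →
      ∃ (G' : SimpleGraph V) (c' : Sym2 V → ℕ), IsRainbowSat H t G' c' by
    apply haux ((⊤ : SimpleGraph V).edgeSet.ncard) ⊥ (fun _ => 1)
    · intro e he
      simp at he
    · rintro ⟨f, -⟩
      obtain ⟨e, he⟩ := hne
      induction e using Sym2.ind with
      | _ a b =>
        exact (f.map_adj_iff.2 (H.mem_edgeSet.1 he) : (⊥ : SimpleGraph V).Adj _ _)
    · simp
  intro k
  induction k with
  | zero =>
    intro G c hc hnr hk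
    by_cases hs : ∀ x y : V, x ≠ y → ¬ G.Adj x y → ∀ i ∈ Finset.Icc 1 t,
        HasRainbowCopy H (G ⊔ SimpleGraph.fromEdgeSet {s(x, y)})
          (fun e => if e = s(x, y) then i else c e)
    · exact ⟨G, c, hc, hnr, hs⟩
    · exfalso
      push_neg at hs
      obtain ⟨x, y, hxy, hnadj, i, hi, hno⟩ := hs
      have hlt : G.edgeSet.ncard < (⊤ : SimpleGraph V).edgeSet.ncard := by
        apply Set.ncard_lt_ncard
        · rw [Set.ssubset_iff_of_subset (SimpleGraph.edgeSet_mono le_top)]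
          exact ⟨s(x, y), (SimpleGraph.mem_edgeSet _).2 hxy, fun h => hnadj ((SimpleGraph.mem_edgeSet _).1 h)⟩
        · exact Set.toFinite _
      omega
  | succ k ih =>
    intro G c hc hnr hk
    by_cases hs : ∀ x y : V, x ≠ y → ¬ G.Adj x y → ∀ i ∈ Finset.Icc 1 t,
        HasRainbowCopy H (G ⊔ SimpleGraph.fromEdgeSet {s(x, y)})
          (fun e => if e = s(x, y) then i else c e)
    · exact ⟨G, c, hc, hnr, hs⟩
    push_neg at hs
    obtain ⟨x, y, hxy, hnadj, i, hi, hno⟩ := hs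
    set G₂ := G ⊔ SimpleGraph.fromEdgeSet {s(x, y)} with hG₂
    set c₂ : Sym2 V → ℕ := fun e => if e = s(x, y) then i else c e with hc₂
    have hedge : G₂.edgeSet = insert s(x, y) G.edgeSet := by
      ext e
      simp only [hG₂, SimpleGraph.edgeSet_sup,
        SimpleGraph.edgeSet_fromEdgeSet, Set.mem_union, Set.mem_diff, Set.mem_singleton_iff,
        Set.mem_insert_iff, Set.mem_setOf_eq]
      constructor
      · rintro (h | ⟨rfl, -⟩)
        · exact Or.inr h
        · exact Or.inl rfl
      · rintro (rfl | h)
        · exact Or.inr ⟨rfl, by simp [Sym2.isDiag_iff_proj_eq, hxy]⟩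
        · exact Or.inl h
    have hxyG : s(x, y) ∉ G.edgeSet := fun h => hnadj ((SimpleGraph.mem_edgeSet _).1 h)
    have hcard : G₂.edgeSet.ncard = G.edgeSet.ncard + 1 := by
      rw [hedge, Set.ncard_insert_of_notMem hxyG (Set.toFinite _)]
    apply ih G₂ c₂
    · intro e he
      by_cases hex : e = s(x, y)
      · rw [hc₂]
        simp only [if_pos hex]
        exact hi
      · rw [hc₂]
        simp only [if_neg hex]
        apply hc
        rw [hG₂, SimpleGraph.edgeSet_sup, SimpleGraph.edgeSet_fromEdgeSet] at he
        rcases he with h | ⟨h, -⟩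
        · exact h
        · exact absurd h hex
    · exact hno
    · have hle : G₂.edgeSet.ncard ≤ (⊤ : SimpleGraph V).edgeSet.ncard :=
        Set.ncard_le_ncard (SimpleGraph.edgeSet_mono le_top) (Set.toFinite _)
      omega
lemma tendsto_aux : Tendsto (fun n : ℕ => -(2 * Real.logb 2 n / Real.sqrt n)) atTop (nhds 0) := by
  have h1 : Tendsto (fun x : ℝ => Real.log x / x ^ (1/2 : ℝ)) atTop (nhds 0) :=
    (isLittleO_log_rpow_atTop (by norm_num)).tendsto_div_nhds_zero
  have h2 : Tendsto (fun n : ℕ => Real.log n / (n:ℝ) ^ (1/2 : ℝ)) atTop (nhds 0) :=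
    h1.comp tendsto_natCast_atTop_atTop
  have h3 : Tendsto (fun n : ℕ => -((2 / Real.log 2) * (Real.log n / (n:ℝ) ^ (1/2 : ℝ)))) atTop (nhds 0) := by
    have := (h2.const_mul (2 / Real.log 2)).neg
    simpa using this
  convert h3 using 2 with n
  rw [Real.logb, Real.sqrt_eq_rpow]
  ring


end AuxRainbow

theorem stmt_15 {W : Type*} [Fintype W] (H : SimpleGraph W)
    (hne : H.edgeSet.Nonempty)
    (htri : ∀ x y : W, H.Adj x y → ∃ z, H.Adj x z ∧ H.Adj y z)
    (t : ℕ) (ht : Nat.card H.edgeSet ≤ t) :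
    ∃ f : ℕ → ℝ, Filter.Tendsto f Filter.atTop (nhds 0) ∧
      ∀ n : ℕ, (1 / (4 * (t : ℝ)) + f n) * ((n : ℝ) * Real.logb 2 n) ≤
        (rainbowSatNum H t n : ℝ) := by
  classical
  haveI := hne.to_subtype
  have ht1 : 1 ≤ t := Nat.succ_le_of_lt (lt_of_lt_of_le Nat.card_pos ht)
  have ht0 : (1 : ℝ) ≤ (t : ℝ) := by exact_mod_cast ht1
  have htpos : (0 : ℝ) < (t : ℝ) := lt_of_lt_of_le one_pos ht0
  refine ⟨fun n => if n ≤ 1 then 0 else -(2 * Real.logb 2 n / Real.sqrt n), ?_, ?_⟩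
  · apply Filter.Tendsto.congr' _ tendsto_aux
    filter_upwards [Filter.eventually_ge_atTop 2] with n hn
    rw [if_neg (by omega)]
  · intro n
    by_cases hn1 : n ≤ 1
    · simp only [if_pos hn1]
      interval_cases n
      · simp
      · simp
    · simp only [if_neg hn1]
      have hn2 : 2 ≤ n := by omega
      have hn2R : (2 : ℝ) ≤ (n : ℝ) := by exact_mod_cast hn2
      have hnposR : (0 : ℝ) < (n : ℝ) := by linarith
      set L : ℝ := Real.logb 2 n with hL
      have hL1 : 1 ≤ L := by
        rw [hL, show (1:ℝ) = Real.logb 2 2 from (Real.logb_self_eq_one (b := 2) (by norm_num)).symm]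
        exact Real.logb_le_logb_of_le (by norm_num) (by norm_num) hn2R
      have hsqpos : 0 < Real.sqrt n := Real.sqrt_pos.2 hnposR
      set d : ℕ := ⌈L / (2 * t)⌉₊ with hd
      have hdpos : 1 ≤ d := by
        rw [hd]
        apply Nat.one_le_ceil_iff.2
        positivity
      have hdlow : L / (2 * t) ≤ (d : ℝ) := Nat.le_ceil _
      have hdup : (d : ℝ) ≤ 2 * L := by
        have h1 : (d : ℝ) < L / (2 * t) + 1 := Nat.ceil_lt_add_one (by positivity)
        have h2 : L / (2 * t) ≤ L := by
          rw [div_le_iff₀ (by positivity)]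
          nlinarith
        linarith
      have hd1c : ((d - 1 : ℕ) : ℝ) ≤ L / (2 * t) := by
        rw [Nat.cast_sub hdpos]
        have h1 : (d : ℝ) < L / (2 * t) + 1 := Nat.ceil_lt_add_one (by positivity)
        simp only [Nat.cast_one]
        linarith
      -- bound t ^ (d-1) ≤ sqrt n
      have hlogt : Real.logb 2 t ≤ (t : ℝ) := by
        rw [Real.logb_le_iff_le_rpow (by norm_num) htpos]
        calc (t : ℝ) ≤ ((2 ^ t : ℕ) : ℝ) := by exact_mod_cast (Nat.lt_two_pow_self (n := t)).le
          _ = (2 : ℝ) ^ (t : ℕ) := by push_cast; ring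
          _ = (2 : ℝ) ^ ((t : ℕ) : ℝ) := (Real.rpow_natCast 2 t).symm
      have hlogtnn : 0 ≤ Real.logb 2 t := Real.logb_nonneg (by norm_num) ht0
      have hpow : ((t : ℝ)) ^ (d - 1 : ℕ) ≤ Real.sqrt n := by
        have h2L : (2 : ℝ) ^ L = n := Real.rpow_logb (by norm_num) (by norm_num) hnposR
        have hts : (t : ℝ) = (2 : ℝ) ^ (Real.logb 2 t) :=
          (Real.rpow_logb (by norm_num) (by norm_num) htpos).symm
        have hexp : Real.logb 2 t * ((d - 1 : ℕ) : ℝ) ≤ L / 2 := by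
          calc Real.logb 2 t * ((d - 1 : ℕ) : ℝ) ≤ (t : ℝ) * (L / (2 * t)) := by
                apply mul_le_mul hlogt hd1c (by positivity) (le_trans (by norm_num) ht0)
            _ = L / 2 := by field_simp
        calc ((t : ℝ)) ^ (d - 1 : ℕ) = ((2 : ℝ) ^ (Real.logb 2 t)) ^ (d - 1 : ℕ) := by rw [← hts]
          _ = (2 : ℝ) ^ (Real.logb 2 t * ((d - 1 : ℕ) : ℝ)) := by
              rw [← Real.rpow_natCast ((2:ℝ) ^ (Real.logb 2 t)) (d-1), ← Real.rpow_mul (by norm_num)]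
          _ ≤ (2 : ℝ) ^ (L / 2) := Real.rpow_le_rpow_of_exponent_le (by norm_num) hexp
          _ = Real.sqrt n := by
              rw [Real.sqrt_eq_rpow, ← h2L, ← Real.rpow_mul (by norm_num), mul_one_div]
      -- get the minimiser
      have hSne : { m | ∃ (G : SimpleGraph (Fin n)) (c : Sym2 (Fin n) → ℕ),
          IsRainbowSat H t G c ∧ Nat.card G.edgeSet = m }.Nonempty := by
        obtain ⟨G, c, hs⟩ := exists_sat (V := Fin n) H hne t
        exact ⟨Nat.card G.edgeSet, G, c, hs, rfl⟩
      obtain ⟨G, c, hsat, hm⟩ := Nat.sInf_mem hSne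
      set m : ℕ := rainbowSatNum H t n with hmdef
      have hmm : G.edgeSet.ncard = m := by
        rw [← Nat.card_coe_set_eq, hm, hmdef, rainbowSatNum]
      have hcount : d * n ≤ 2 * m + d * (d * t ^ (d - 1)) := by
        rw [← hmm]
        exact sat_count htri ht1 hdpos hsat
      have hcastineq : (d : ℝ) * n ≤ 2 * (m : ℝ) + (d : ℝ) * ((d : ℝ) * ((t : ℝ)) ^ (d - 1 : ℕ)) := by
        exact_mod_cast hcount
      have hLnn : (0:ℝ) ≤ L := by linarith
      have hdnn : (0:ℝ) ≤ (d:ℝ) := by positivity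
      have hpnn : (0:ℝ) ≤ ((t:ℝ)) ^ (d - 1 : ℕ) := by positivity
      have h1 : (L / (2 * t)) * n ≤ (d : ℝ) * n :=
        mul_le_mul_of_nonneg_right hdlow (by positivity)
      have h2 : (d : ℝ) * ((d : ℝ) * ((t : ℝ)) ^ (d - 1 : ℕ)) ≤ (2 * L) * ((2 * L) * Real.sqrt n) := by
        have hinner : (d : ℝ) * ((t : ℝ)) ^ (d - 1 : ℕ) ≤ (2 * L) * Real.sqrt n :=
          mul_le_mul hdup hpow hpnn (by linarith)
        exact mul_le_mul hdup hinner (by positivity) (by linarith)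
      have h3 : (L / (2 * t)) * n = 2 * ((n : ℝ) * L / (4 * t)) := by
        field_simp
        ring
      have hmain : (n : ℝ) * L / (4 * t) - 2 * L ^ 2 * Real.sqrt n ≤ (m : ℝ) := by
        nlinarith [h1, h2, hcastineq, h3]
      have hfin : (1 / (4 * (t : ℝ)) + -(2 * L / Real.sqrt n)) * ((n : ℝ) * L) =
          (n : ℝ) * L / (4 * t) - 2 * L ^ 2 * Real.sqrt n := by
        have e1 : (1 / (4 * (t:ℝ)) + -(2 * L / Real.sqrt n)) * ((n:ℝ) * L) =
            (n:ℝ) * L / (4 * t) - 2 * L ^ 2 * ((n:ℝ) / Real.sqrt n) := by ring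
        rw [e1, Real.div_sqrt]
      rw [hL] at hfin ⊢
      rw [hfin]
      exact hmain
end

section
/- For any r ≥ 3 and all n, sat(n, R(K_r)) ≤ 2(r-2)n, where sat(n, R(K_r)) denotes the rainbow saturation number of K_r with an unbounded palette of colours (colours taken from the natural numbers). -/
open SimpleGraph

/-- side of a vertex: 0 = first clique B₁, 1 = second clique B₂, 2 = outside. -/
def sd (r n : ℕ) (v : Fin n) : ℕ :=
  if v.val < r - 2 then 0 else if v.val < 2 * (r - 2) then 1 else 2

lemma sd_eq_zero_iff {r n : ℕ} (v : Fin n) : sd r n v = 0 ↔ v.val < r - 2 := by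
  unfold sd; split_ifs with h1 h2 <;> simp <;> omega

lemma sd_eq_one_iff {r n : ℕ} (v : Fin n) : sd r n v = 1 ↔ (r - 2 ≤ v.val ∧ v.val < 2 * (r - 2)) := by
  unfold sd; split_ifs with h1 h2 <;> simp <;> omega

lemma sd_eq_two_iff {r n : ℕ} (v : Fin n) : sd r n v = 2 ↔ 2 * (r - 2) ≤ v.val := by
  unfold sd; split_ifs with h1 h2 <;> simp <;> omega

lemma sd_le_two {r n : ℕ} (v : Fin n) : sd r n v ≤ 2 := by
  unfold sd; split_ifs with h1 h2 <;> omega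

/-- the saturating graph: two cliques of size r-2 (joined to each other iff r ≥ 4),
each outside vertex joined to everything inside. -/
def bigG (r n : ℕ) : SimpleGraph (Fin n) where
  Adj x y := x ≠ y ∧ ¬(sd r n x = 2 ∧ sd r n y = 2) ∧ (r = 3 → (sd r n x = 2 ∨ sd r n y = 2))
  symm := by
    constructor
    rintro x y ⟨h1, h2, h3⟩
    exact ⟨h1.symm, fun ⟨a, b⟩ => h2 ⟨b, a⟩, fun h => (h3 h).symm⟩
  loopless := ⟨fun x ⟨h, _⟩ => h rfl⟩

lemma bigG_adj {r n : ℕ} {x y : Fin n} : (bigG r n).Adj x y ↔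
    x ≠ y ∧ ¬(sd r n x = 2 ∧ sd r n y = 2) ∧ (r = 3 → (sd r n x = 2 ∨ sd r n y = 2)) :=
  Iff.rfl

/-- pair code, symmetric and injective on unordered pairs -/
def pc {n : ℕ} (x y : Fin n) : ℕ := max x.val y.val * n + min x.val y.val

lemma enc_inj {n a b a' b' : ℕ} (hb : b < n) (hb' : b' < n)
    (h : a * n + b = a' * n + b') : a = a' ∧ b = b' := by
  have hn : 0 < n := lt_of_le_of_lt (Nat.zero_le b) hb
  have h1 : (a * n + b) / n = a := by
    rw [mul_comm, Nat.mul_add_div hn, Nat.div_eq_of_lt hb, Nat.add_zero]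
  have h2 : (a' * n + b') / n = a' := by
    rw [mul_comm, Nat.mul_add_div hn, Nat.div_eq_of_lt hb', Nat.add_zero]
  have h3 : (a * n + b) % n = b := by
    rw [mul_comm, Nat.mul_add_mod, Nat.mod_eq_of_lt hb]
  have h4 : (a' * n + b') % n = b' := by
    rw [mul_comm, Nat.mul_add_mod, Nat.mod_eq_of_lt hb']
  exact ⟨by rw [← h1, ← h2, h], by rw [← h3, ← h4, h]⟩

lemma pc_inj {n : ℕ} {x y x' y' : Fin n} (h : pc x y = pc x' y') : s(x, y) = s(x', y') := by
  unfold pc at h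
  have h1 : min x.val y.val < n := lt_of_le_of_lt (min_le_left _ _) x.isLt
  have h2 : min x'.val y'.val < n := lt_of_le_of_lt (min_le_left _ _) x'.isLt
  obtain ⟨hM, hm⟩ := enc_inj h1 h2 h
  rw [Sym2.eq_iff]
  have : (x.val = x'.val ∧ y.val = y'.val) ∨ (x.val = y'.val ∧ y.val = x'.val) := by omega
  rcases this with ⟨e1, e2⟩ | ⟨e1, e2⟩
  · exact Or.inl ⟨Fin.ext e1, Fin.ext e2⟩
  · exact Or.inr ⟨Fin.ext e1, Fin.ext e2⟩

/-- the colouring, as a function of two vertices -/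
def colFn (r n : ℕ) (x y : Fin n) : ℕ :=
  if (sd r n x = 2 ∧ sd r n y = 2) ∨
      (sd r n x ≠ sd r n y ∧ sd r n x ≠ 2 ∧ sd r n y ≠ 2) then 0
  else 4 * pc x y + 1 + min (sd r n x) (sd r n y)

lemma colFn_symm (r n : ℕ) (x y : Fin n) : colFn r n x y = colFn r n y x := by
  unfold colFn pc
  rw [max_comm x.val, min_comm x.val, min_comm (sd r n x)]
  congr 1
  simp only [eq_iff_iff]
  tauto

/-- the colouring on Sym2 -/
def bigC (r n : ℕ) : Sym2 (Fin n) → ℕ := Sym2.lift ⟨fun x y => colFn r n x y, colFn_symm r n⟩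

@[simp] lemma bigC_mk {r n : ℕ} (x y : Fin n) : bigC r n s(x, y) = colFn r n x y := rfl

/-- cross edges get colour 0 -/
lemma colFn_cross {r n : ℕ} {x y : Fin n} (h1 : sd r n x ≠ sd r n y)
    (h2 : sd r n x ≠ 2) (h3 : sd r n y ≠ 2) : colFn r n x y = 0 := by
  unfold colFn; rw [if_pos (Or.inr ⟨h1, h2, h3⟩)]

/-- class-s edges get colour 4·pc+1+s -/
lemma colFn_class {r n : ℕ} {x y : Fin n} {s : ℕ} (hs : s ≤ 1)
    (hx : sd r n x = s ∨ sd r n x = 2) (hy : sd r n y = s ∨ sd r n y = 2)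
    (hxy : ¬(sd r n x = 2 ∧ sd r n y = 2)) :
    colFn r n x y = 4 * pc x y + 1 + s := by
  unfold colFn
  rw [if_neg]
  · congr 1
    rcases hx with hx | hx <;> rcases hy with hy | hy <;> simp [hx, hy] <;> omega
  · rintro (h | ⟨h1, h2, h3⟩)
    · exact hxy h
    · rcases hx with hx | hx <;> rcases hy with hy | hy <;> omega

lemma filter_val_lt_card_le (n k : ℕ) :
    (Finset.univ.filter (fun v : Fin n => v.val < k)).card ≤ k := by
  have := Finset.card_le_card_of_injOn (f := fun v : Fin n => v.val)
    (t := Finset.range k) (s := Finset.univ.filter (fun v : Fin n => v.val < k))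
    (by intro v hv; simp only [Finset.mem_coe, Finset.mem_filter] at hv; exact Finset.mem_range.mpr hv.2)
    (by intro a _ b _ hab; exact Fin.ext hab)
  simpa using this

lemma bigG_card_edges (r n : ℕ) (hr : 3 ≤ r) :
    Nat.card (bigG r n).edgeSet ≤ 2 * (r - 2) * n := by
  classical
  have hdeg : ∀ v : Fin n, (bigG r n).degree v ≤
      (if v.val < 2 * (r - 2) then n else 2 * (r - 2)) := by
    intro v
    split_ifs with hv
    · calc (bigG r n).degree v ≤ Fintype.card (Fin n) := by
            apply le_trans (Finset.card_le_univ _)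
            simp
        _ = n := Fintype.card_fin n
    · have hsub : (bigG r n).neighborFinset v ⊆
          Finset.univ.filter (fun w : Fin n => w.val < 2 * (r - 2)) := by
        intro w hw
        rw [SimpleGraph.mem_neighborFinset, bigG_adj] at hw
        rw [Finset.mem_filter]
        refine ⟨Finset.mem_univ _, ?_⟩
        have hv2 : sd r n v = 2 := (sd_eq_two_iff v).mpr (by omega)
        have hw2 : sd r n w ≠ 2 := fun h => hw.2.1 ⟨hv2, h⟩
        have := sd_eq_two_iff (r := r) (n := n) w
        omega
      calc (bigG r n).degree v ≤ _ := Finset.card_le_card hsub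
        _ ≤ 2 * (r - 2) := filter_val_lt_card_le n _
  have hsum : ∑ v : Fin n, (bigG r n).degree v ≤ 2 * (2 * (r - 2) * n) := by
    calc ∑ v : Fin n, (bigG r n).degree v
        ≤ ∑ v : Fin n, (if v.val < 2 * (r - 2) then n else 2 * (r - 2)) :=
          Finset.sum_le_sum (fun v _ => hdeg v)
      _ = (Finset.univ.filter (fun v : Fin n => v.val < 2 * (r - 2))).card * n +
          (Finset.univ.filter (fun v : Fin n => ¬ v.val < 2 * (r - 2))).card * (2 * (r - 2)) := by
          rw [Finset.sum_ite, Finset.sum_const, Finset.sum_const, smul_eq_mul, smul_eq_mul]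
      _ ≤ (2 * (r - 2)) * n + n * (2 * (r - 2)) := by
          gcongr
          · exact filter_val_lt_card_le n _
          · calc _ ≤ Finset.univ.card := Finset.card_le_univ _
              _ = n := by simp
      _ = 2 * (2 * (r - 2) * n) := by ring
  have htw := (bigG r n).sum_degrees_eq_twice_card_edges
  have hcard : Nat.card (bigG r n).edgeSet = (bigG r n).edgeFinset.card := by
    rw [Nat.card_eq_fintype_card, SimpleGraph.edgeFinset_card]
  omega

lemma bigG_no_rainbow (r n : ℕ) (hr : 3 ≤ r) :
    ¬ HasRainbowCopy (⊤ : SimpleGraph (Fin r)) (bigG r n) (bigC r n) := by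
  classical
  rintro ⟨f, hf⟩
  have hadj : ∀ a b : Fin r, a ≠ b → (bigG r n).Adj (f a) (f b) := by
    intro a b hab
    exact f.map_adj_iff.mpr (by rw [SimpleGraph.top_adj]; exact hab)
  by_cases hr3 : r = 3
  · subst hr3
    have h01 := (bigG_adj.mp (hadj 0 1 (by decide)))
    have h02 := (bigG_adj.mp (hadj 0 2 (by decide)))
    have h12 := (bigG_adj.mp (hadj 1 2 (by decide)))
    have e01 := h01.2.1; have e02 := h02.2.1; have e12 := h12.2.1
    have g01 := h01.2.2 rfl; have g02 := h02.2.2 rfl; have g12 := h12.2.2 rfl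
    rcases g01 with h | h <;> rcases g02 with h' | h' <;> rcases g12 with h'' | h'' <;> tauto
  · -- r ≥ 4
    have hr4 : 4 ≤ r := by omega
    set A := Finset.univ.filter (fun k : Fin r => sd r n (f k) = 0) with hA
    set B := Finset.univ.filter (fun k : Fin r => sd r n (f k) = 1) with hB
    set C := Finset.univ.filter (fun k : Fin r => sd r n (f k) = 2) with hC
    have hAcard : A.card ≤ r - 2 := by
      have := Finset.card_le_card_of_injOn (f := fun k : Fin r => (f k).val)
        (t := Finset.range (r - 2)) (s := A)
        (by intro k hk
            simp only [hA, Finset.mem_coe, Finset.mem_filter] at hk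
            exact Finset.mem_range.mpr ((sd_eq_zero_iff (f k)).mp hk.2))
        (by intro a _ b _ hab
            exact f.injective (Fin.ext hab))
      simpa using this
    have hBcard : B.card ≤ r - 2 := by
      have := Finset.card_le_card_of_injOn (f := fun k : Fin r => (f k).val - (r - 2))
        (t := Finset.range (r - 2)) (s := B)
        (by intro k hk
            simp only [hB, Finset.mem_coe, Finset.mem_filter] at hk
            have := (sd_eq_one_iff (f k)).mp hk.2
            refine Finset.mem_range.mpr ?_
            show (f k).val - (r - 2) < r - 2
            omega)
        (by intro a ha b hb hab
            simp only [Finset.mem_coe, hB, Finset.mem_filter] at ha hb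
            have h1 := (sd_eq_one_iff (f a)).mp ha.2
            have h2 := (sd_eq_one_iff (f b)).mp hb.2
            have hab' : (f a).val - (r - 2) = (f b).val - (r - 2) := hab
            exact f.injective (Fin.ext (by omega)))
      simpa using this
    have hCcard : C.card ≤ 1 := by
      rw [Finset.card_le_one]
      intro a ha b hb
      rw [hC, Finset.mem_filter] at ha hb
      by_contra hab
      exact (bigG_adj.mp (hadj a b hab)).2.1 ⟨ha.2, hb.2⟩
    have hABC : A.card + B.card + C.card = r := by
      have hdisjAB : Disjoint A B := by
        rw [Finset.disjoint_left]
        intro k hk hk'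
        rw [hA, Finset.mem_filter] at hk
        rw [hB, Finset.mem_filter] at hk'
        omega
      have hdisjABC : Disjoint (A ∪ B) C := by
        rw [Finset.disjoint_left]
        intro k hk hk'
        rw [Finset.mem_union, hA, hB, Finset.mem_filter, Finset.mem_filter] at hk
        rw [hC, Finset.mem_filter] at hk'
        rcases hk with hk | hk <;> omega
      have hcover : A ∪ B ∪ C = Finset.univ := by
        ext k
        simp only [Finset.mem_union, hA, hB, hC, Finset.mem_filter, Finset.mem_univ, true_and,
          iff_true]
        have := sd_le_two (r := r) (f k)
        omega
      have := congrArg Finset.card hcover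
      rw [Finset.card_union_of_disjoint hdisjABC, Finset.card_union_of_disjoint hdisjAB] at this
      simpa using this
    -- key: two same-side vertices and one on the other side give two cross edges of colour 0
    have key : ∀ k₁ k₂ j : Fin r, k₁ ≠ k₂ →
        sd r n (f k₁) = sd r n (f k₂) → sd r n (f k₁) ≠ 2 → sd r n (f j) ≠ 2 →
        sd r n (f k₁) ≠ sd r n (f j) → False := by
      intro k₁ k₂ j hk12 hsame hk2 hj2 hdiff
      have hk1j : k₁ ≠ j := fun h => hdiff (by rw [h])
      have hk2j : k₂ ≠ j := fun h => (hsame ▸ hdiff) (by rw [h])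
      have he₁ : s(k₁, j) ∈ (⊤ : SimpleGraph (Fin r)).edgeSet := by
        rw [SimpleGraph.mem_edgeSet, SimpleGraph.top_adj]; exact hk1j
      have he₂ : s(k₂, j) ∈ (⊤ : SimpleGraph (Fin r)).edgeSet := by
        rw [SimpleGraph.mem_edgeSet, SimpleGraph.top_adj]; exact hk2j
      have hc₁ : bigC r n (Sym2.map f s(k₁, j)) = 0 := by
        rw [Sym2.map_pair_eq, bigC_mk]
        exact colFn_cross hdiff hk2 hj2
      have hc₂ : bigC r n (Sym2.map f s(k₂, j)) = 0 := by
        rw [Sym2.map_pair_eq, bigC_mk]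
        exact colFn_cross (hsame ▸ hdiff) (hsame ▸ hk2) hj2
      have := hf _ he₁ _ he₂ (by rw [hc₁, hc₂])
      rw [Sym2.eq_iff] at this
      rcases this with ⟨h1, _⟩ | ⟨h1, h2⟩
      · exact hk12 h1
      · exact hk1j h1
    have hsplit : (2 ≤ A.card ∧ 1 ≤ B.card) ∨ (1 ≤ A.card ∧ 2 ≤ B.card) := by omega
    rcases hsplit with ⟨h2A, h1B⟩ | ⟨h1A, h2B⟩
    · obtain ⟨k₁, hk₁, k₂, hk₂, hk12⟩ := Finset.one_lt_card.mp h2A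
      obtain ⟨j, hj⟩ := Finset.card_pos.mp h1B
      rw [hA, Finset.mem_filter] at hk₁ hk₂
      rw [hB, Finset.mem_filter] at hj
      exact key k₁ k₂ j hk12 (by omega) (by omega) (by omega) (by omega)
    · obtain ⟨k₁, hk₁, k₂, hk₂, hk12⟩ := Finset.one_lt_card.mp h2B
      obtain ⟨j, hj⟩ := Finset.card_pos.mp h1A
      rw [hB, Finset.mem_filter] at hk₁ hk₂
      rw [hA, Finset.mem_filter] at hj
      exact key k₁ k₂ j hk12 (by omega) (by omega) (by omega) (by omega)

lemma bigG_sat_outer (r n : ℕ) (hr : 3 ≤ r) (hn : 2 * (r - 2) ≤ n)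
    (x y : Fin n) (hxy : x ≠ y) (hx2 : sd r n x = 2) (hy2 : sd r n y = 2) (i : ℕ) :
    HasRainbowCopy (⊤ : SimpleGraph (Fin r)) ((bigG r n) ⊔ SimpleGraph.fromEdgeSet {s(x, y)})
      (fun e => if e = s(x, y) then i else bigC r n e) := by
  classical
  set s : ℕ := if i % 4 = 1 then 1 else 0 with hs
  have hs1 : s ≤ 1 := by rw [hs]; split_ifs <;> omega
  have hsi : i % 4 ≠ 1 + s := by rw [hs]; split_ifs with h <;> omega
  have hxv : 2 * (r - 2) ≤ x.val := (sd_eq_two_iff x).mp hx2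
  have hyv : 2 * (r - 2) ≤ y.val := (sd_eq_two_iff y).mp hy2
  have hsb : s * (r - 2) ≤ r - 2 := by
    calc s * (r - 2) ≤ 1 * (r - 2) := Nat.mul_le_mul_right _ hs1
      _ = r - 2 := one_mul _
  set F : Fin r → Fin n := fun k =>
    if hk : k.val < r - 2 then ⟨s * (r - 2) + k.val, by omega⟩
    else if k.val = r - 2 then x else y with hF
  have hFlt : ∀ k : Fin r, k.val < r - 2 → (F k).val = s * (r - 2) + k.val := by
    intro k hk; rw [hF]; simp only [dif_pos hk]
  have hFx : ∀ k : Fin r, k.val = r - 2 → F k = x := by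
    intro k hk; rw [hF]; simp only []; rw [dif_neg (by omega), if_pos hk]
  have hFy : ∀ k : Fin r, r - 2 < k.val → F k = y := by
    intro k hk; rw [hF]; simp only []; rw [dif_neg (by omega), if_neg (by omega)]
  have hsdF : ∀ k : Fin r, k.val < r - 2 → sd r n (F k) = s := by
    intro k hk
    have hv := hFlt k hk
    have : s = 0 ∨ s = 1 := by omega
    rcases this with h | h
    · rw [h] at hv ⊢; rw [sd_eq_zero_iff]; omega
    · rw [h] at hv ⊢; rw [sd_eq_one_iff]; omega
  have hsd2 : ∀ k : Fin r, ¬(k.val < r - 2) → sd r n (F k) = 2 := by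
    intro k hk
    rcases Nat.lt_or_ge (r - 2) k.val with h | h
    · rw [hFy k h]; exact hy2
    · rw [hFx k (by omega)]; exact hx2
  have hsdor : ∀ k : Fin r, sd r n (F k) = s ∨ sd r n (F k) = 2 := by
    intro k
    by_cases hk : k.val < r - 2
    · exact Or.inl (hsdF k hk)
    · exact Or.inr (hsd2 k hk)
  have hFinj : Function.Injective F := by
    intro a b hab
    rcases lt_trichotomy a.val (r - 2) with ha | ha | ha <;>
      rcases lt_trichotomy b.val (r - 2) with hb | hb | hb
    · have h1 := hFlt a ha; have h2 := hFlt b hb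
      rw [hab] at h1; exact Fin.ext (by omega)
    · have h1 := hFlt a ha; rw [hab, hFx b hb] at h1; exact absurd h1 (by omega)
    · have h1 := hFlt a ha; rw [hab, hFy b hb] at h1; exact absurd h1 (by omega)
    · have h1 := hFlt b hb; rw [← hab, hFx a ha] at h1; exact absurd h1 (by omega)
    · exact Fin.ext (by omega)
    · rw [hFx a ha, hFy b hb] at hab; exact absurd hab hxy
    · have h1 := hFlt b hb; rw [← hab, hFy a ha] at h1; exact absurd h1 (by omega)
    · rw [hFy a ha, hFx b hb] at hab; exact absurd hab.symm hxy
    · exact Fin.ext (by omega)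
  set ix : Fin r := ⟨r - 2, by omega⟩ with hix
  set iy : Fin r := ⟨r - 1, by omega⟩ with hiy
  have hFix : F ix = x := hFx ix rfl
  have hFiy : F iy = y := hFy iy (by simp [hiy]; omega)
  have himg_iff : ∀ a b : Fin r, s(F a, F b) = s(x, y) ↔ s(a, b) = s(ix, iy) := by
    intro a b
    constructor
    · intro h
      rw [Sym2.eq_iff] at h ⊢
      rcases h with ⟨h1, h2⟩ | ⟨h1, h2⟩
      · exact Or.inl ⟨hFinj (h1.trans hFix.symm), hFinj (h2.trans hFiy.symm)⟩
      · exact Or.inr ⟨hFinj (h1.trans hFiy.symm), hFinj (h2.trans hFix.symm)⟩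
    · intro h
      rw [Sym2.eq_iff] at h ⊢
      rcases h with ⟨h1, h2⟩ | ⟨h1, h2⟩
      · exact Or.inl ⟨by rw [h1, hFix], by rw [h2, hFiy]⟩
      · exact Or.inr ⟨by rw [h1, hFiy], by rw [h2, hFix]⟩
  have hboth2 : ∀ a b : Fin r, a ≠ b → s(a, b) ≠ s(ix, iy) →
      ¬(sd r n (F a) = 2 ∧ sd r n (F b) = 2) := by
    rintro a b hab hne ⟨h2a, h2b⟩
    have ha : ¬ a.val < r - 2 := fun h => by rw [hsdF a h] at h2a; omega
    have hb : ¬ b.val < r - 2 := fun h => by rw [hsdF b h] at h2b; omega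
    have hvne : a.val ≠ b.val := fun h => hab (Fin.ext h)
    have ha' := a.isLt; have hb' := b.isLt
    apply hne
    rw [Sym2.eq_iff]
    simp only [hix, hiy, Fin.ext_iff]
    omega
  refine ⟨⟨⟨F, hFinj⟩, ?_⟩, ?_⟩
  · intro a b
    simp only [Function.Embedding.coeFn_mk, SimpleGraph.sup_adj, SimpleGraph.top_adj]
    constructor
    · intro h hab
      subst hab
      rcases h with h | h
      · exact h.ne rfl
      · exact h.ne rfl
    · intro hab
      rcases lt_trichotomy a.val (r - 2) with ha | ha | ha <;>
        rcases lt_trichotomy b.val (r - 2) with hb | hb | hb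
      · refine Or.inl (bigG_adj.mpr ⟨hFinj.ne hab, ?_, ?_⟩)
        · rw [hsdF a ha, hsdF b hb]; omega
        · intro h3; exfalso; exact hab (Fin.ext (by omega))
      · refine Or.inl (bigG_adj.mpr ⟨hFinj.ne hab, ?_, ?_⟩)
        · rw [hsdF a ha, hFx b hb]; omega
        · intro _; rw [hFx b hb]; exact Or.inr hx2
      · refine Or.inl (bigG_adj.mpr ⟨hFinj.ne hab, ?_, ?_⟩)
        · rw [hsdF a ha, hFy b hb]; omega
        · intro _; rw [hFy b hb]; exact Or.inr hy2
      · refine Or.inl (bigG_adj.mpr ⟨hFinj.ne hab, ?_, ?_⟩)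
        · rw [hsdF b hb, hFx a ha]; omega
        · intro _; rw [hFx a ha]; exact Or.inl hx2
      · exact absurd (Fin.ext (ha.trans hb.symm) : a = b) hab
      · refine Or.inr ((SimpleGraph.fromEdgeSet_adj _).mpr ⟨?_, ?_⟩)
        · rw [hFx a ha, hFy b hb]; exact Set.mem_singleton _
        · rw [hFx a ha, hFy b hb]; exact hxy
      · refine Or.inl (bigG_adj.mpr ⟨hFinj.ne hab, ?_, ?_⟩)
        · rw [hsdF b hb, hFy a ha]; omega
        · intro _; rw [hFy a ha]; exact Or.inl hy2
      · refine Or.inr ((SimpleGraph.fromEdgeSet_adj _).mpr ⟨?_, ?_⟩)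
        · rw [hFy a ha, hFx b hb, Sym2.eq_swap]; exact Set.mem_singleton _
        · rw [hFy a ha, hFx b hb]; exact hxy.symm
      · exact absurd (Fin.ext (by omega) : a = b) hab
  · intro e₁ he₁ e₂ he₂
    induction' e₁ using Sym2.ind with a b
    induction' e₂ using Sym2.ind with a' b'
    intro hcc
    rw [SimpleGraph.mem_edgeSet, SimpleGraph.top_adj] at he₁ he₂
    simp only [Sym2.map_pair_eq, RelEmbedding.coe_mk, Function.Embedding.coeFn_mk] at hcc
    have hcol : ∀ p q : Fin r, p ≠ q → s(p, q) ≠ s(ix, iy) →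
        (if s(F p, F q) = s(x, y) then i else bigC r n s(F p, F q)) =
          4 * pc (F p) (F q) + 1 + s := by
      intro p q hpq hne
      rw [if_neg (fun h => hne ((himg_iff p q).mp h)), bigC_mk]
      exact colFn_class hs1 (hsdor p) (hsdor q) (hboth2 p q hpq hne)
    by_cases h1 : s(a, b) = s(ix, iy) <;> by_cases h2 : s(a', b') = s(ix, iy)
    · rw [h1, h2]
    · exfalso
      rw [if_pos ((himg_iff a b).mpr h1), hcol a' b' he₂ h2] at hcc
      omega
    · exfalso
      rw [if_pos ((himg_iff a' b').mpr h2), hcol a b he₁ h1] at hcc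
      omega
    · rw [hcol a b he₁ h1, hcol a' b' he₂ h2] at hcc
      have hpc : pc (F a) (F b) = pc (F a') (F b') := by omega
      have := pc_inj hpc
      apply Sym2.map.injective hFinj
      rw [Sym2.map_pair_eq, Sym2.map_pair_eq]
      exact this

lemma bigG_sat_inner (n : ℕ) (hn : 6 ≤ n) (x y : Fin n) (hx0 : x.val = 0) (hy1 : y.val = 1)
    (i : ℕ) :
    HasRainbowCopy (⊤ : SimpleGraph (Fin 3)) ((bigG 3 n) ⊔ SimpleGraph.fromEdgeSet {s(x, y)})
      (fun e => if e = s(x, y) then i else bigC 3 n e) := by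
  classical
  have hxy : x ≠ y := fun h => by rw [h] at hx0; omega
  have hsx : sd 3 n x = 0 := by rw [sd_eq_zero_iff]; omega
  have hsy : sd 3 n y = 1 := by rw [sd_eq_one_iff]; omega
  set z₁ : Fin n := ⟨2, by omega⟩ with hz₁
  set z₂ : Fin n := ⟨3, by omega⟩ with hz₂
  have hcx : ∀ z : Fin n, sd 3 n z = 2 → colFn 3 n x z = 4 * pc x z + 1 + 0 :=
    fun z hz => colFn_class (by omega) (Or.inl hsx) (Or.inr hz) (by rw [hsx]; omega)
  have hcy : ∀ z : Fin n, sd 3 n z = 2 → colFn 3 n y z = 4 * pc y z + 1 + 1 :=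
    fun z hz => colFn_class (by omega) (Or.inl hsy) (Or.inr hz) (by rw [hsy]; omega)
  have hsz₁ : sd 3 n z₁ = 2 := by rw [sd_eq_two_iff]
  have hsz₂ : sd 3 n z₂ = 2 := by rw [sd_eq_two_iff]; simp [hz₂]
  set z : Fin n := if i = colFn 3 n x z₁ ∨ i = colFn 3 n y z₁ then z₂ else z₁ with hz
  have hsz : sd 3 n z = 2 := by rw [hz]; split_ifs <;> assumption
  have hzv : 2 ≤ z.val ∧ z.val ≤ 3 := by
    rw [hz]; split_ifs <;> simp [hz₁, hz₂]
  have hne1 : i ≠ colFn 3 n x z ∧ i ≠ colFn 3 n y z := by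
    rw [hz]; split_ifs with h
    · rcases h with h | h
      · constructor
        · intro he
          rw [hcx z₁ hsz₁] at h; rw [hcx z₂ hsz₂] at he
          have hpc : pc x z₁ = pc x z₂ := by omega
          have := pc_inj hpc
          rw [Sym2.eq_iff] at this
          rcases this with ⟨_, h2⟩ | ⟨h1, _⟩
          · exact absurd (congrArg Fin.val h2) (by simp [hz₁, hz₂])
          · exact absurd (congrArg Fin.val h1) (by simp [hz₂, hx0])
        · intro he
          rw [hcx z₁ hsz₁] at h; rw [hcy z₂ hsz₂] at he
          omega
      · constructor
        · intro he
          rw [hcy z₁ hsz₁] at h; rw [hcx z₂ hsz₂] at he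
          omega
        · intro he
          rw [hcy z₁ hsz₁] at h; rw [hcy z₂ hsz₂] at he
          have hpc : pc y z₁ = pc y z₂ := by omega
          have := pc_inj hpc
          rw [Sym2.eq_iff] at this
          rcases this with ⟨_, h2⟩ | ⟨h1, _⟩
          · exact absurd (congrArg Fin.val h2) (by simp [hz₁, hz₂])
          · exact absurd (congrArg Fin.val h1) (by simp [hz₂, hy1])
    · push_neg at h; exact h
  have hxz : x ≠ z := fun h => by have h' := congrArg Fin.val h; omega
  have hyz : y ≠ z := fun h => by have h' := congrArg Fin.val h; omega
  set F : Fin 3 → Fin n := fun k => if k.val = 0 then x else if k.val = 1 then y else z with hFdef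
  set j0 : Fin 3 := ⟨0, by omega⟩
  set j1 : Fin 3 := ⟨1, by omega⟩
  set j2 : Fin 3 := ⟨2, by omega⟩
  have hFc : ∀ k : Fin 3, (F k = x ∧ k = j0) ∨ (F k = y ∧ k = j1) ∨ (F k = z ∧ k = j2) := by
    intro k
    have hk3 := k.isLt
    by_cases h0 : k.val = 0
    · exact Or.inl ⟨by simp only [hFdef, h0, ↓reduceIte], Fin.ext h0⟩
    · by_cases h1 : k.val = 1
      · exact Or.inr (Or.inl ⟨by simp only [hFdef, h0, h1, one_ne_zero, ↓reduceIte], Fin.ext h1⟩)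
      · exact Or.inr (Or.inr ⟨by simp only [hFdef, h0, h1, ↓reduceIte], Fin.ext (show k.val = 2 by omega)⟩)
  have hFinj : Function.Injective F := by
    intro a b hab
    rcases hFc a with ⟨ha, hav⟩ | ⟨ha, hav⟩ | ⟨ha, hav⟩ <;>
      rcases hFc b with ⟨hb, hbv⟩ | ⟨hb, hbv⟩ | ⟨hb, hbv⟩ <;>
      rw [ha, hb] at hab <;>
      first
        | (exact hav.trans hbv.symm)
        | (exact absurd (congrArg Fin.val hab) (by omega))
  refine ⟨⟨⟨F, hFinj⟩, ?_⟩, ?_⟩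
  · intro a b
    simp only [Function.Embedding.coeFn_mk, SimpleGraph.sup_adj, SimpleGraph.top_adj]
    constructor
    · intro h hab
      subst hab
      rcases h with h | h
      · exact h.ne rfl
      · exact h.ne rfl
    · intro hab
      rcases hFc a with ⟨ha, hav⟩ | ⟨ha, hav⟩ | ⟨ha, hav⟩ <;>
        rcases hFc b with ⟨hb, hbv⟩ | ⟨hb, hbv⟩ | ⟨hb, hbv⟩ <;>
        rw [ha, hb] <;>
        [skip; skip; skip; skip; skip; skip; skip; skip; skip]
      · exact absurd (hav.trans hbv.symm) hab
      · exact Or.inr ((SimpleGraph.fromEdgeSet_adj _).mpr ⟨Set.mem_singleton _, hxy⟩)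
      · exact Or.inl (bigG_adj.mpr ⟨hxz, by rw [hsx]; omega, fun _ => Or.inr hsz⟩)
      · refine Or.inr ((SimpleGraph.fromEdgeSet_adj _).mpr ⟨?_, hxy.symm⟩)
        rw [Sym2.eq_swap]; exact Set.mem_singleton _
      · exact absurd (hav.trans hbv.symm) hab
      · exact Or.inl (bigG_adj.mpr ⟨hyz, by rw [hsy]; omega, fun _ => Or.inr hsz⟩)
      · exact Or.inl (bigG_adj.mpr ⟨fun h => hxz h.symm, by rw [hsx]; omega,
          fun _ => Or.inl hsz⟩)
      · exact Or.inl (bigG_adj.mpr ⟨fun h => hyz h.symm, by rw [hsy]; omega,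
          fun _ => Or.inl hsz⟩)
      · exact absurd (hav.trans hbv.symm) hab
  · intro e₁ he₁ e₂ he₂
    induction' e₁ using Sym2.ind with a b
    induction' e₂ using Sym2.ind with a' b'
    intro hcc
    rw [SimpleGraph.mem_edgeSet, SimpleGraph.top_adj] at he₁ he₂
    simp only [Sym2.map_pair_eq, RelEmbedding.coe_mk, Function.Embedding.coeFn_mk] at hcc
    have hsxy1 : s(x, z) ≠ s(x, y) := by
      intro hcon
      rw [Sym2.eq_iff] at hcon
      rcases hcon with ⟨_, h2⟩ | ⟨h1, _⟩
      · exact hyz h2.symm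
      · exact hxy h1
    have hsxy2 : s(y, z) ≠ s(x, y) := by
      intro hcon
      rw [Sym2.eq_iff] at hcon
      rcases hcon with ⟨h1, _⟩ | ⟨_, h2⟩
      · exact hxy h1.symm
      · exact hxz h2.symm
    have hA : (if s(x, y) = s(x, y) then i else bigC 3 n s(x, y)) = i := if_pos rfl
    have hB : (if s(x, z) = s(x, y) then i else bigC 3 n s(x, z)) = colFn 3 n x z := by
      rw [if_neg hsxy1, bigC_mk]
    have hC : (if s(y, z) = s(x, y) then i else bigC 3 n s(y, z)) = colFn 3 n y z := by
      rw [if_neg hsxy2, bigC_mk]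
    have hcxz := hcx z hsz
    have hcyz := hcy z hsz
    have hclass : ∀ p q : Fin 3, p ≠ q →
        (s(F p, F q) = s(x, y) ∧ s(p, q) = s(j0, j1)) ∨
        (s(F p, F q) = s(x, z) ∧ s(p, q) = s(j0, j2)) ∨
        (s(F p, F q) = s(y, z) ∧ s(p, q) = s(j1, j2)) := by
      intro p q hpq
      rcases hFc p with ⟨hp, hpv⟩ | ⟨hp, hpv⟩ | ⟨hp, hpv⟩ <;>
        rcases hFc q with ⟨hq, hqv⟩ | ⟨hq, hqv⟩ | ⟨hq, hqv⟩ <;>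
        rw [hp, hq, hpv, hqv] <;>
        [skip; skip; skip; skip; skip; skip; skip; skip; skip]
      · exact absurd (hpv.trans hqv.symm) hpq
      · exact Or.inl ⟨rfl, rfl⟩
      · exact Or.inr (Or.inl ⟨rfl, rfl⟩)
      · exact Or.inl ⟨Sym2.eq_swap, Sym2.eq_swap⟩
      · exact absurd (hpv.trans hqv.symm) hpq
      · exact Or.inr (Or.inr ⟨rfl, rfl⟩)
      · exact Or.inr (Or.inl ⟨Sym2.eq_swap, Sym2.eq_swap⟩)
      · exact Or.inr (Or.inr ⟨Sym2.eq_swap, Sym2.eq_swap⟩)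
      · exact absurd (hpv.trans hqv.symm) hpq
    rcases hclass a b he₁ with ⟨hi1, hee1⟩ | ⟨hi1, hee1⟩ | ⟨hi1, hee1⟩ <;>
      rcases hclass a' b' he₂ with ⟨hi2, hee2⟩ | ⟨hi2, hee2⟩ | ⟨hi2, hee2⟩ <;>
      rw [hi1, hi2] at hcc <;>
      simp only [hA, hB, hC, ite_true] at hcc <;>
      first
        | (exact hee1.trans hee2.symm)
        | omega

lemma bigG_isSat (r n : ℕ) (hr : 3 ≤ r) (hn : 4 * r - 6 ≤ n) :
    IsRainbowSatInf (⊤ : SimpleGraph (Fin r)) (bigG r n) (bigC r n) := by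
  constructor
  · exact bigG_no_rainbow r n hr
  · intro x y hxy hG i
    rw [bigG_adj] at hG
    have hcase : (sd r n x = 2 ∧ sd r n y = 2) ∨ (r = 3 ∧ ¬(sd r n x = 2 ∨ sd r n y = 2)) := by
      tauto
    rcases hcase with ⟨hx2, hy2⟩ | ⟨hr3, hxy2⟩
    · exact bigG_sat_outer r n hr (by omega) x y hxy hx2 hy2 i
    · subst hr3
      push_neg at hxy2
      obtain ⟨hx2, hy2⟩ := hxy2
      have hx' := sd_eq_two_iff (r := 3) x
      have hy' := sd_eq_two_iff (r := 3) y
      have hxv : x.val < 2 := by omega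
      have hyv : y.val < 2 := by omega
      have hvne : x.val ≠ y.val := fun h => hxy (Fin.ext h)
      rcases (by omega : (x.val = 0 ∧ y.val = 1) ∨ (y.val = 0 ∧ x.val = 1)) with
        ⟨h0, h1⟩ | ⟨h0, h1⟩
      · exact bigG_sat_inner n (by omega) x y h0 h1 i
      · rw [show s(x, y) = s(y, x) from Sym2.eq_swap]
        exact bigG_sat_inner n (by omega) y x h0 h1 i

lemma top_isSat (r n : ℕ) (hr : 3 ≤ r) :
    IsRainbowSatInf (⊤ : SimpleGraph (Fin r)) (⊤ : SimpleGraph (Fin n)) (fun _ => 0) := by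
  constructor
  · rintro ⟨f, hf⟩
    have h01 : s((⟨0, by omega⟩ : Fin r), (⟨1, by omega⟩ : Fin r)) ∈
        (⊤ : SimpleGraph (Fin r)).edgeSet := by
      rw [SimpleGraph.mem_edgeSet, SimpleGraph.top_adj]
      intro h
      have := congrArg Fin.val h
      simp at this
    have h02 : s((⟨0, by omega⟩ : Fin r), (⟨2, by omega⟩ : Fin r)) ∈
        (⊤ : SimpleGraph (Fin r)).edgeSet := by
      rw [SimpleGraph.mem_edgeSet, SimpleGraph.top_adj]
      intro h
      have := congrArg Fin.val h
      simp at this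
    have heq := hf _ h01 _ h02 rfl
    rw [Sym2.eq_iff] at heq
    rcases heq with ⟨h1, h2⟩ | ⟨h1, h2⟩
    · have := congrArg Fin.val h2; simp at this
    · have := congrArg Fin.val h1; simp at this
  · intro x y hxy hadj i
    rw [SimpleGraph.top_adj] at hadj
    exact absurd hxy hadj

lemma top_card (r n : ℕ) (hr : 3 ≤ r) (hn : n ≤ 4 * r - 7) :
    Nat.card (⊤ : SimpleGraph (Fin n)).edgeSet ≤ 2 * (r - 2) * n := by
  classical
  have h1 : Nat.card (⊤ : SimpleGraph (Fin n)).edgeSet =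
      (⊤ : SimpleGraph (Fin n)).edgeFinset.card := by
    rw [Nat.card_eq_fintype_card, SimpleGraph.edgeFinset_card]
  rw [h1]
  have h2 := SimpleGraph.card_edgeFinset_le_card_choose_two (G := (⊤ : SimpleGraph (Fin n)))
  rw [Fintype.card_fin] at h2
  have h3 : n.choose 2 = n * (n - 1) / 2 := Nat.choose_two_right n
  have h4 : n * (n - 1) ≤ 2 * (2 * (r - 2) * n) := by
    have h5 : n - 1 ≤ 4 * (r - 2) := by omega
    calc n * (n - 1) ≤ n * (4 * (r - 2)) := Nat.mul_le_mul_left n h5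
      _ = 2 * (2 * (r - 2) * n) := by ring
  have h6 : n * (n - 1) / 2 ≤ 2 * (r - 2) * n := Nat.div_le_of_le_mul h4
  omega

theorem stmt_17 (r : ℕ) (hr : 3 ≤ r) (n : ℕ) :
    rainbowSatNumInf (⊤ : SimpleGraph (Fin r)) n ≤ 2 * (r - 2) * n := by
  have key : ∃ (G : SimpleGraph (Fin n)) (c : Sym2 (Fin n) → ℕ),
      IsRainbowSatInf (⊤ : SimpleGraph (Fin r)) G c ∧
        Nat.card G.edgeSet ≤ 2 * (r - 2) * n := by
    by_cases hn : n ≤ 4 * r - 7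
    · exact ⟨⊤, fun _ => 0, top_isSat r n hr, top_card r n hr hn⟩
    · exact ⟨bigG r n, bigC r n, bigG_isSat r n hr (by omega), bigG_card_edges r n hr⟩
  obtain ⟨G, c, hsat, hcard⟩ := key
  have hmem : Nat.card G.edgeSet ∈ { m | ∃ (G : SimpleGraph (Fin n)) (c : Sym2 (Fin n) → ℕ),
      IsRainbowSatInf (⊤ : SimpleGraph (Fin r)) G c ∧ Nat.card G.edgeSet = m } :=
    ⟨G, c, hsat, rfl⟩
  exact le_trans (Nat.sInf_le hmem) hcard
end
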